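/- Consider a lax commutative square of distributive lattice homomorphisms f : A → B, g : A → C, u : B → D, v : C → D with u ∘ f ≤ v ∘ g, and the dual lax square of Priestley spaces v* : Spec D → Spec C, u* : Spec D → Spec B, g* : Spec C → Spec A, f* : Spec B → Spec A. Then the lattice square has the interpolation property (for all b ∈ B, c ∈ C with u(b) ≤ v(c) there is a ∈ A with b ≤ f(a), g(a) ≤ c) if and only if the dual square has the interpolation property (for all y ∈ Spec B, z ∈ Spec C with f*(y) ≤ g*(z) there is x ∈ Spec D with y ≤ u*(x) and v*(x) ≤ z). -/
import Mathlib


/-- A point of the Priestley dual of a bounded lattice `A`: a bounded lattice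
homomorphism `A → 2`, encoded as a `Bool`-valued function. -/
def IsSpecPoint {A : Type*} [Lattice A] [BoundedOrder A] (x : A → Bool) : Prop :=
  (∀ a b : A, x (a ⊓ b) = (x a && x b)) ∧ (∀ a b : A, x (a ⊔ b) = (x a || x b)) ∧
    x ⊤ = true ∧ x ⊥ = false

/-- The Priestley dual space of a bounded lattice `A`, with the pointwise order. -/
abbrev SpecL (A : Type*) [Lattice A] [BoundedOrder A] : Type _ :=
  {x : A → Bool // IsSpecPoint x}

open Order

/-- A point is monotone. -/
lemma specPoint_mono {A : Type*} [Lattice A] [BoundedOrder A] {x : A → Bool}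
    (hx : IsSpecPoint x) {a b : A} (hab : a ≤ b) : x a ≤ x b := by
  have h : x a = (x a && x b) := by
    rw [← hx.1 a b, inf_eq_left.2 hab]
  cases hb : x b
  · rw [h, hb, Bool.and_false]
  · simp

/-- From a disjoint filter-ideal pair, produce a point of the spectrum which is
`true` on the filter and `false` on the ideal. -/
lemma exists_specPoint_sep {α : Type*} [DistribLattice α] [BoundedOrder α]
    (F : PFilter α) (I : Ideal α) (h : Disjoint (F : Set α) (I : Set α)) :
    ∃ x : SpecL α, (∀ a ∈ F, x.1 a = true) ∧ ∀ a ∈ I, x.1 a = false := by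
  classical
  obtain ⟨J, hJp, hIJ, hFJ⟩ := DistribLattice.prime_ideal_of_disjoint_filter_ideal h
  set x : α → Bool := fun a => if a ∈ J then false else true with hxdef
  have hxt : ∀ a : α, x a = true ↔ a ∉ J := by
    intro a; by_cases ha : a ∈ J <;> simp [hxdef, ha]
  have hxf : ∀ a : α, x a = false ↔ a ∈ J := by
    intro a; by_cases ha : a ∈ J <;> simp [hxdef, ha]
  have hpt : IsSpecPoint x := by
    refine ⟨?_, ?_, ?_, ?_⟩
    · intro a b
      by_cases ha : a ∈ J
      · have : a ⊓ b ∈ J := J.lower inf_le_left ha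
        simp [hxdef, ha, this]
      · by_cases hb : b ∈ J
        · have : a ⊓ b ∈ J := J.lower inf_le_right hb
          simp [hxdef, ha, hb, this]
        · have : a ⊓ b ∉ J := fun hm => (hJp.mem_or_mem hm).elim ha hb
          simp [hxdef, ha, hb, this]
    · intro a b
      have : a ⊔ b ∈ J ↔ a ∈ J ∧ b ∈ J := Ideal.sup_mem_iff
      by_cases ha : a ∈ J <;> by_cases hb : b ∈ J <;>
        simp [hxdef, ha, hb, this]
    · rw [hxt]; exact hJp.toIsProper.top_notMem
    · rw [hxf]; exact J.bot_mem
  refine ⟨⟨x, hpt⟩, fun a ha => ?_, fun a ha => ?_⟩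
  · rw [hxt]
    exact fun hmem => Set.disjoint_left.1 hFJ ha hmem
  · rw [hxf]
    exact hIJ ha

/-- (Self-duality of interpolation.) A lax commutative square
`u ∘ f ≤ v ∘ g` of bounded distributive lattice homomorphisms has the interpolation
property iff its Priestley dual square (given by precomposition) has the interpolation
property. -/
theorem stmt_8 {A B C D : Type*} [DistribLattice A] [BoundedOrder A]
    [DistribLattice B] [BoundedOrder B] [DistribLattice C] [BoundedOrder C]
    [DistribLattice D] [BoundedOrder D]
    (f : BoundedLatticeHom A B) (g : BoundedLatticeHom A C)
    (u : BoundedLatticeHom B D) (v : BoundedLatticeHom C D)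
    (hlax : ∀ a : A, u (f a) ≤ v (g a)) :
    (∀ (b : B) (c : C), u b ≤ v c → ∃ a : A, b ≤ f a ∧ g a ≤ c) ↔
      ∀ (y : SpecL B) (z : SpecL C),
        (∀ a : A, y.1 (f a) ≤ z.1 (g a)) →
          ∃ x : SpecL D, (∀ b : B, y.1 b ≤ x.1 (u b)) ∧ ∀ c : C, x.1 (v c) ≤ z.1 c := by
  constructor
  · -- lattice interpolation → spec interpolation
    intro hint y z hyz
    -- the filter generated by the image under `u` of the "true set" of `y`
    have hF : IsPFilter {d : D | ∃ b : B, y.1 b = true ∧ u b ≤ d} := by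
      refine IsPFilter.of_def ⟨⊤, ⊤, y.2.2.2.1, le_top⟩ ?_ ?_
      · rintro d₁ ⟨b₁, hb₁, hub₁⟩ d₂ ⟨b₂, hb₂, hub₂⟩
        refine ⟨d₁ ⊓ d₂, ⟨b₁ ⊓ b₂, ?_, ?_⟩, inf_le_left, inf_le_right⟩
        · rw [y.2.1, hb₁, hb₂]; rfl
        · rw [map_inf]; exact inf_le_inf hub₁ hub₂
      · rintro d₁ d₂ h12 ⟨b₁, hb₁, hub₁⟩
        exact ⟨b₁, hb₁, hub₁.trans h12⟩
    have hI : IsIdeal {d : D | ∃ c : C, z.1 c = false ∧ d ≤ v c} := by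
      refine ⟨?_, ⟨⊥, ⊥, z.2.2.2.2, bot_le⟩, ?_⟩
      · rintro d₁ d₂ h12 ⟨c₁, hc₁, hvc₁⟩
        exact ⟨c₁, hc₁, h12.trans hvc₁⟩
      · rintro d₁ ⟨c₁, hc₁, hvc₁⟩ d₂ ⟨c₂, hc₂, hvc₂⟩
        refine ⟨d₁ ⊔ d₂, ⟨c₁ ⊔ c₂, ?_, ?_⟩, le_sup_left, le_sup_right⟩
        · rw [z.2.2.1, hc₁, hc₂]; rfl
        · rw [map_sup]; exact sup_le_sup hvc₁ hvc₂
      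
    have hdisj : Disjoint ((hF.toPFilter : PFilter D) : Set D)
        ((hI.toIdeal : Ideal D) : Set D) := by
      rw [Set.disjoint_left]
      rintro d ⟨b, hb, hub⟩ ⟨c, hc, hvc⟩
      obtain ⟨a, hba, hac⟩ := hint b c (hub.trans hvc)
      have h1 : y.1 (f a) = true :=
        le_antisymm (by simp) (hb ▸ specPoint_mono y.2 hba)
      have h2 : z.1 (g a) = false :=
        le_antisymm (hc ▸ specPoint_mono z.2 hac) (by simp)
      have := hyz a
      rw [h1, h2] at this
      exact absurd this (by simp)
    obtain ⟨x, hxF, hxI⟩ := exists_specPoint_sep hF.toPFilter hI.toIdeal hdisj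
    refine ⟨x, fun b => ?_, fun c => ?_⟩
    · cases hb : y.1 b
      · simp
      · rw [hxF (u b) ⟨b, hb, le_rfl⟩]
    · cases hc : z.1 c
      · rw [hxI (v c) ⟨c, hc, le_rfl⟩]
      · simp
  · -- spec interpolation → lattice interpolation
    intro hspec b c hbc
    by_contra hno
    push_neg at hno
    -- filter {a | b ≤ f a} and ideal {a | g a ≤ c} in A are disjoint
    have hFA : IsPFilter {a : A | b ≤ f a} := by
      refine IsPFilter.of_def ⟨⊤, by simp⟩ ?_ ?_
      · rintro a₁ h₁ a₂ h₂
        exact ⟨a₁ ⊓ a₂, by rw [Set.mem_setOf_eq, map_inf]; exact le_inf h₁ h₂,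
          inf_le_left, inf_le_right⟩
      · intro a₁ a₂ h12 h₁
        exact h₁.trans (OrderHomClass.mono f h12)
    have hIA : IsIdeal {a : A | g a ≤ c} := by
      refine ⟨?_, ⟨⊥, by simp⟩, ?_⟩
      · intro a₁ a₂ h12 h₁
        exact (OrderHomClass.mono g h12).trans h₁
      · rintro a₁ h₁ a₂ h₂
        exact ⟨a₁ ⊔ a₂, by rw [Set.mem_setOf_eq, map_sup]; exact sup_le h₁ h₂,
          le_sup_left, le_sup_right⟩
    obtain ⟨P, hPp, hIP, hFP⟩ := DistribLattice.prime_ideal_of_disjoint_filter_ideal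
      (F := hFA.toPFilter) (I := hIA.toIdeal)
      (Set.disjoint_left.2 fun a ha ha' => hno a ha ha')
    -- In B: the principal filter at b versus the ideal generated by f '' P
    have hIB : IsIdeal {b' : B | ∃ q ∈ P, b' ≤ f q} := by
      refine ⟨?_, ⟨⊥, ⊥, P.bot_mem, bot_le⟩, ?_⟩
      · rintro b₁ b₂ h12 ⟨q, hq, hbq⟩
        exact ⟨q, hq, h12.trans hbq⟩
      · rintro b₁ ⟨q₁, hq₁, h₁⟩ b₂ ⟨q₂, hq₂, h₂⟩
        exact ⟨b₁ ⊔ b₂, ⟨q₁ ⊔ q₂, P.sup_mem hq₁ hq₂,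
          by rw [map_sup]; exact sup_le_sup h₁ h₂⟩, le_sup_left, le_sup_right⟩
    have hdB : Disjoint ((PFilter.principal b : PFilter B) : Set B)
        ((hIB.toIdeal : Ideal B) : Set B) := by
      rw [Set.disjoint_left]
      rintro b' hb' ⟨q, hq, hbq⟩
      have : b ≤ f q := le_trans hb' hbq
      exact Set.disjoint_left.1 hFP this hq
    obtain ⟨y, hyF, hyI⟩ := exists_specPoint_sep _ _ hdB
    -- In C: the filter generated by g '' Pᶜ versus the principal ideal at c
    have hFC : IsPFilter {c' : C | ∃ p : A, p ∉ P ∧ g p ≤ c'} := by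
      refine IsPFilter.of_def ⟨⊤, ⊤, hPp.toIsProper.top_notMem, le_top⟩ ?_ ?_
      · rintro c₁ ⟨p₁, hp₁, h₁⟩ c₂ ⟨p₂, hp₂, h₂⟩
        refine ⟨c₁ ⊓ c₂, ⟨p₁ ⊓ p₂, fun hm => (hPp.mem_or_mem hm).elim hp₁ hp₂,
          by rw [map_inf]; exact inf_le_inf h₁ h₂⟩, inf_le_left, inf_le_right⟩
      · rintro c₁ c₂ h12 ⟨p, hp, h₁⟩
        exact ⟨p, hp, h₁.trans h12⟩
    have hdC : Disjoint ((hFC.toPFilter : PFilter C) : Set C)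
        ((Ideal.principal c : Ideal C) : Set C) := by
      rw [Set.disjoint_left]
      rintro c' ⟨p, hp, hgp⟩ hc'
      exact hp (hIP (show g p ≤ c from hgp.trans hc'))
    obtain ⟨z, hzF, hzI⟩ := exists_specPoint_sep _ _ hdC
    -- apply spec interpolation
    have hyz : ∀ a : A, y.1 (f a) ≤ z.1 (g a) := by
      intro a
      cases ha : y.1 (f a)
      · simp
      · by_cases hmem : a ∈ P
        · exact absurd ha (by rw [hyI (f a) ⟨a, hmem, le_rfl⟩]; simp)
        · rw [hzF (g a) ⟨a, hmem, le_rfl⟩]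
    obtain ⟨x, hxu, hxv⟩ := hspec y z hyz
    have h1 : x.1 (u b) = true := by
      have := hxu b
      rw [hyF b (by exact le_rfl)] at this
      exact le_antisymm (by simp) this
    have h2 : x.1 (v c) = false := by
      have := hxv c
      rw [hzI c (by exact le_rfl)] at this
      exact le_antisymm this (by simp)
    have := specPoint_mono x.2 hbc
    rw [h1, h2] at this
    exact absurd this (by simp)
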